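/- Let f(z) = √(Im z) on the upper half-plane ℍ with hyperbolic area measure μ (density y^{-2} dx dy), and for τ > 0 let (A_τ f)(z) = μ(B_τ(z))^{-1} ∫_{B_τ(z)} f dμ denote the average of f over the hyperbolic ball of radius τ centered at z. Then there is a constant C > 0 such that for all τ ≥ 1 and all z ∈ ℍ, (A_τ f)(z) ≤ C·τ·exp(−τ/2)·f(z). In particular (A_τ f)(z)/f(z) → 0 uniformly in z as τ → ∞. -/

import Mathlib

set_option maxHeartbeats 1000000


open MeasureTheory UpperHalfPlane
open scoped ENNReal

noncomputable instance : MeasurableSpace UpperHalfPlane :=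
  MeasurableSpace.comap (fun z : UpperHalfPlane => (z : ℂ)) inferInstance

/-- The hyperbolic area measure on the upper half-plane, with density
`(Im z)⁻²` with respect to Lebesgue measure. -/
noncomputable def hypMeasure : Measure UpperHalfPlane :=
  ((volume : Measure ℂ).comap fun z : UpperHalfPlane => (z : ℂ)).withDensity
    fun z => ENNReal.ofReal ((z.im ^ 2)⁻¹)

namespace SqrtImAux

lemma mE : MeasurableEmbedding (fun z : UpperHalfPlane => (z : ℂ)) :=
  { injective := UpperHalfPlane.coe_injective
    measurable := comap_measurable _
    measurableSet_image' := by
      rintro _ ⟨t, ht, rfl⟩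
      rw [Set.image_preimage_eq_inter_range]
      exact ht.inter (by
        rw [UpperHalfPlane.range_coe]
        exact measurableSet_lt measurable_const Complex.measurable_im) }

lemma range_coe : Set.range (fun z : UpperHalfPlane => (z : ℂ)) = {w : ℂ | 0 < w.im} := by
  ext w
  constructor
  · rintro ⟨ζ, rfl⟩; exact ζ.2
  · intro h; exact ⟨⟨w, h⟩, rfl⟩

lemma lintegral_hyp (f : ℂ → ℝ≥0∞) (hf : Measurable f) :
    ∫⁻ ζ : UpperHalfPlane, f (ζ : ℂ) ∂hypMeasure
      = ∫⁻ w in {w : ℂ | 0 < w.im}, ENNReal.ofReal ((w.im ^ 2)⁻¹) * f w ∂volume := by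
  have hδ : Measurable fun ζ : UpperHalfPlane => ENNReal.ofReal ((ζ.im ^ 2)⁻¹) :=
    (((Complex.measurable_im.comp mE.measurable).pow_const 2).inv).ennreal_ofReal
  have h1 : ∫⁻ ζ : UpperHalfPlane, f (ζ : ℂ) ∂hypMeasure
      = ∫⁻ ζ : UpperHalfPlane, ENNReal.ofReal ((ζ.im ^ 2)⁻¹) * f (ζ : ℂ)
          ∂(Measure.comap (fun z : UpperHalfPlane => (z : ℂ)) volume) := by
    rw [hypMeasure]
    simpa [Function.comp] using
      lintegral_withDensity_eq_lintegral_mul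
        (Measure.comap (fun z : UpperHalfPlane => (z : ℂ)) volume) hδ (hf.comp mE.measurable)
  rw [h1]
  have h2 := mE.lintegral_map (μ := Measure.comap (fun z : UpperHalfPlane => (z : ℂ)) volume)
    (f := fun w : ℂ => ENNReal.ofReal ((w.im ^ 2)⁻¹) * f w)
  rw [mE.map_comap, range_coe] at h2
  exact h2.symm

lemma lintegral_strip (x₀ : ℝ) (I : Set ℝ) (hI : MeasurableSet I) (r c : ℝ → ℝ)
    (hr : Measurable r) (hc : Measurable c) :
    ∫⁻ w : ℂ, Set.indicator {w : ℂ | w.im ∈ I ∧ |w.re - x₀| ≤ r w.im}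
        (fun w => ENNReal.ofReal (c w.im)) w ∂volume
      = ∫⁻ y in I, ENNReal.ofReal (c y) * ENNReal.ofReal (2 * r y) ∂volume := by
  set G : ℝ × ℝ → ℝ≥0∞ := fun p =>
    Set.indicator {p : ℝ × ℝ | p.2 ∈ I ∧ |p.1 - x₀| ≤ r p.2}
      (fun p => ENNReal.ofReal (c p.2)) p with hG
  have hAmeas : MeasurableSet {p : ℝ × ℝ | p.2 ∈ I ∧ |p.1 - x₀| ≤ r p.2} := by
    apply MeasurableSet.inter
    · exact measurable_snd hI
    · exact measurableSet_le ((measurable_fst.sub measurable_const).abs) (hr.comp measurable_snd)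
  have hGmeas : Measurable G :=
    ((hc.comp measurable_snd).ennreal_ofReal).indicator hAmeas
  have key : ∫⁻ w : ℂ, Set.indicator {w : ℂ | w.im ∈ I ∧ |w.re - x₀| ≤ r w.im}
        (fun w => ENNReal.ofReal (c w.im)) w ∂volume = ∫⁻ p : ℝ × ℝ, G p ∂volume := by
    have := (Complex.volume_preserving_equiv_real_prod).lintegral_comp hGmeas
    rw [← this]
    rfl
  rw [key, Measure.volume_eq_prod ℝ ℝ, lintegral_prod_symm' G hGmeas]
  have inner : ∀ y : ℝ, (∫⁻ x : ℝ, G (x, y) ∂volume)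
      = I.indicator (fun y => ENNReal.ofReal (c y) * ENNReal.ofReal (2 * r y)) y := by
    intro y
    by_cases hy : y ∈ I
    · have : (fun x : ℝ => G (x, y))
          = Set.indicator (Set.Icc (x₀ - r y) (x₀ + r y)) (fun _ => ENNReal.ofReal (c y)) := by
        funext x
        have hx' : x ∈ Set.Icc (x₀ - r y) (x₀ + r y) ↔ |x - x₀| ≤ r y := by
          rw [Set.mem_Icc, abs_sub_le_iff]
          constructor <;> (rintro ⟨h1, h2⟩; exact ⟨by linarith, by linarith⟩)
        have hmem : (x, y) ∈ {p : ℝ × ℝ | p.2 ∈ I ∧ |p.1 - x₀| ≤ r p.2} ↔ |x - x₀| ≤ r y := by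
          simp [hy]
        by_cases hx : |x - x₀| ≤ r y
        · simp only [hG]
          rw [Set.indicator_of_mem (hmem.mpr hx), Set.indicator_of_mem (hx'.mpr hx)]
        · simp only [hG]
          rw [Set.indicator_of_notMem (fun h => hx (hmem.mp h)),
            Set.indicator_of_notMem (fun h => hx (hx'.mp h))]
      rw [this, lintegral_indicator measurableSet_Icc, setLIntegral_const, Real.volume_Icc,
        Set.indicator_of_mem hy]
      congr 1
      ring_nf
    · have : (fun x : ℝ => G (x, y)) = fun _ => 0 := by
        funext x
        simp [hG, Set.indicator_apply, Set.mem_setOf_eq, hy]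
      rw [this, lintegral_const, zero_mul, Set.indicator_of_notMem hy]
  simp_rw [inner]
  rw [lintegral_indicator hI]

lemma lintegral_inv_Icc {lo hi : ℝ} (h0 : 0 < lo) (h : lo ≤ hi) :
    ∫⁻ y in Set.Icc lo hi, ENNReal.ofReal y⁻¹ ∂volume
      = ENNReal.ofReal (Real.log (hi / lo)) := by
  have hint : IntegrableOn (fun y : ℝ => y⁻¹) (Set.Icc lo hi) volume := by
    apply ContinuousOn.integrableOn_Icc
    intro y hy
    exact (continuousAt_inv₀ (ne_of_gt (lt_of_lt_of_le h0 hy.1))).continuousWithinAt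
  have hnn : 0 ≤ᵐ[volume.restrict (Set.Icc lo hi)] fun y : ℝ => y⁻¹ := by
    filter_upwards [ae_restrict_mem measurableSet_Icc] with y hy
    exact inv_nonneg.mpr (le_of_lt (lt_of_lt_of_le h0 hy.1))
  rw [← ofReal_integral_eq_lintegral_ofReal hint hnn]
  congr 1
  rw [MeasureTheory.integral_Icc_eq_integral_Ioc, ← intervalIntegral.integral_of_le h]
  exact integral_inv (by
    intro hmem
    rw [Set.uIcc_of_le h] at hmem
    exact absurd hmem.1 (not_le.mpr h0))

lemma strip_arith {E a y d2 : ℝ} (ha : 0 < a) (hy : 0 < y) (hE1 : 1 < E)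
    (hc : d2 + (a - y) ^ 2 ≤ ((E + E⁻¹) / 2 - 1) * (2 * a * y)) (hd : 0 ≤ d2) :
    a / E ≤ y ∧ y ≤ a * E ∧ d2 ≤ a * E * y := by
  have hEpos : 0 < E := lt_trans one_pos hE1
  have hEinv : E * E⁻¹ = 1 := mul_inv_cancel₀ (ne_of_gt hEpos)
  have hEinvpos : 0 < E⁻¹ := inv_pos.mpr hEpos
  have hEinvle : E⁻¹ ≤ 1 := by nlinarith [mul_pos hEinvpos (sub_pos.mpr hE1)]
  have ha2 : a ^ 2 * (E * E⁻¹) = a ^ 2 := by rw [hEinv, mul_one]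
  have hy2 : y ^ 2 * (E * E⁻¹) = y ^ 2 := by rw [hEinv, mul_one]
  have hup : y ≤ a * E := by
    by_contra hcon
    push_neg at hcon
    have h1 : 0 < y - a * E := by linarith
    have h2 : 0 < y - a * E⁻¹ := by nlinarith [mul_pos ha (sub_pos.mpr hE1)]
    nlinarith [mul_pos h1 h2, ha2]
  have hlo : a / E ≤ y := by
    rw [div_le_iff₀ hEpos]
    by_contra hcon
    push_neg at hcon
    have h1 : 0 < a - y * E := by linarith
    have h2 : 0 < a - y * E⁻¹ := by nlinarith [mul_pos hy (sub_pos.mpr hE1)]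
    nlinarith [mul_pos h1 h2, hy2]
  refine ⟨hlo, hup, ?_⟩
  nlinarith [sq_nonneg (a - y), mul_pos ha hy]

lemma val_eq {y : ℝ} (hy : 0 < y) :
    (y ^ 2)⁻¹ * Real.sqrt y = (Real.sqrt y)⁻¹ * y⁻¹ := by
  have hsq : Real.sqrt y * Real.sqrt y = y := Real.mul_self_sqrt hy.le
  have hsp : 0 < Real.sqrt y := Real.sqrt_pos.mpr hy
  have h1 : y ≠ 0 := ne_of_gt hy
  have h2 : Real.sqrt y ≠ 0 := ne_of_gt hsp
  rw [sq]
  field_simp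
  nlinarith [hsq]

lemma div_le_mul_self {a E : ℝ} (ha : 0 < a) (hE1 : 1 < E) : a / E ≤ a * E := by
  have hEpos : 0 < E := lt_trans one_pos hE1
  rw [div_le_iff₀ hEpos]
  have h1 : 1 < E * E := by nlinarith
  nlinarith

lemma rect_arith {q E a x y : ℝ} (ha : 0 < a) (hq_lb : 1 < q) (hs_lb : 1.64 < q ^ 2)
    (hs_ub : q ^ 2 < 1.65) (hq4E : q ^ 4 ≤ E)
    (hy1 : a * q ^ 2 / E ≤ y) (hy2 : y ≤ a * q ^ 4 / E)
    (hx : x ^ 2 ≤ (a * q / 2) ^ 2) :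
    1 + (x ^ 2 + (a - y) ^ 2) / (2 * a * y) < (E + E⁻¹) / 2 := by
  have hqpos : 0 < q := lt_trans one_pos hq_lb
  have hq2pos : 0 < q ^ 2 := by positivity
  have hEpos : 0 < E := lt_of_lt_of_le (by positivity) hq4E
  have hy1pos : 0 < a * q ^ 2 / E := by positivity
  have hypos : 0 < y := lt_of_lt_of_le hy1pos hy1
  have hq24 : q ^ 2 ≤ q ^ 4 := by nlinarith
  have hyA : y ≤ a := by
    refine le_trans hy2 ?_
    rw [div_le_iff₀ hEpos]
    nlinarith
  set u : ℝ := a * q ^ 2 / E with hu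
  have hupos : 0 < u := hy1pos
  have hy1A : u ≤ a := le_trans hy1 hyA
  have hyyu : y * u ≤ a ^ 2 := by nlinarith [mul_le_mul hyA hy1A hupos.le ha.le]
  have hmono : (a - y) ^ 2 * u ≤ (a - u) ^ 2 * y := by
    nlinarith [mul_nonneg (sub_nonneg.mpr hy1) (sub_nonneg.mpr hyyu)]
  have hxu : x ^ 2 * u ≤ (a * q / 2) ^ 2 * y :=
    mul_le_mul hx hy1 hupos.le (by positivity)
  have hdivle : (x ^ 2 + (a - y) ^ 2) / (2 * a * y)
      ≤ ((a * q / 2) ^ 2 + (a - u) ^ 2) / (2 * a * u) := by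
    rw [div_le_div_iff₀ (by positivity) (by positivity)]
    have hsum : x ^ 2 * u + (a - y) ^ 2 * u ≤ (a * q / 2) ^ 2 * y + (a - u) ^ 2 * y :=
      add_le_add hxu hmono
    nlinarith [mul_le_mul_of_nonneg_left hsum (by positivity : (0 : ℝ) ≤ 2 * a)]
  have hclosed : 1 + ((a * q / 2) ^ 2 + (a - u) ^ 2) / (2 * a * u)
      = 1 + E / 8 + (E - q ^ 2) ^ 2 / (2 * q ^ 2 * E) := by
    rw [hu]
    field_simp
    ring
  have hq8 : q ^ 4 * q ^ 4 ≤ E * E := mul_le_mul hq4E hq4E (by positivity) hEpos.le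
  have h34 : (0 : ℝ) < 3 * q ^ 2 - 4 := by nlinarith
  have h4l : (2.6896 : ℝ) < q ^ 4 := by nlinarith
  have h4u : q ^ 4 < 2.7225 := by nlinarith
  have hpoly : 0 < 3 * q ^ 2 * (E * E) - 4 * (E * E) + 4 * q ^ 2 - 4 * q ^ 4 := by
    nlinarith [mul_le_mul_of_nonneg_left hq8 h34.le, h4l, h4u, hs_lb, hs_ub]
  have hineq : 1 + E / 8 + (E - q ^ 2) ^ 2 / (2 * q ^ 2 * E) < (E + E⁻¹) / 2 := by
    rw [← sub_pos]
    have hrepr : (E + E⁻¹) / 2 - (1 + E / 8 + (E - q ^ 2) ^ 2 / (2 * q ^ 2 * E))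
        = (3 * q ^ 2 * (E * E) - 4 * (E * E) + 4 * q ^ 2 - 4 * q ^ 4) / (8 * q ^ 2 * E) := by
      field_simp
      ring
    rw [hrepr]
    exact div_pos hpoly (by positivity)
  calc 1 + (x ^ 2 + (a - y) ^ 2) / (2 * a * y)
      ≤ 1 + ((a * q / 2) ^ 2 + (a - u) ^ 2) / (2 * a * u) := by linarith
    _ = 1 + E / 8 + (E - q ^ 2) ^ 2 / (2 * q ^ 2 * E) := hclosed
    _ < (E + E⁻¹) / 2 := hineq

lemma final_arith {q E a τ : ℝ} (ha : 0 < a) (hτ : 0 < τ) (hq_lb : 1 < q)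
    (hs_lb : 1.64 < q ^ 2) (hs_ub : q ^ 2 < 1.65) (hE : Real.exp τ = E) :
    (((a * q ^ 4 / E) ^ 2)⁻¹ * (2 * (a * q / 2)) * (a * q ^ 4 / E - a * q ^ 2 / E))⁻¹
        * (2 * Real.sqrt (a * E) * (τ + τ))
      ≤ 100 * τ * Real.exp (-τ / 2) * Real.sqrt a := by
  have hEpos : 0 < E := hE ▸ Real.exp_pos τ
  have hqpos : 0 < q := lt_trans one_pos hq_lb
  have hq21 : (1 : ℝ) < q ^ 2 := by linarith
  have hb : Real.sqrt E = Real.exp (τ / 2) := by rw [← hE, ← Real.exp_half]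
  have h1 : Real.sqrt (a * E) = Real.sqrt a * Real.exp (τ / 2) := by
    rw [Real.sqrt_mul ha.le, hb]
  have hD : (((a * q ^ 4 / E) ^ 2)⁻¹ * (2 * (a * q / 2)) * (a * q ^ 4 / E - a * q ^ 2 / E))
      = E * (q ^ 2 - 1) / q ^ 5 := by
    field_simp
  rw [hD, h1]
  have hsa : 0 < Real.sqrt a := Real.sqrt_pos.mpr ha
  have hbpos : 0 < Real.exp (τ / 2) := Real.exp_pos _
  have hmb : 0 < Real.exp (-τ / 2) := Real.exp_pos _
  have hDpos : 0 < E * (q ^ 2 - 1) / q ^ 5 := by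
    apply div_pos (mul_pos hEpos (by linarith)) (by positivity)
  rw [inv_mul_le_iff₀ hDpos]
  have hEm : E * Real.exp (-τ / 2) = Real.exp (τ / 2) := by
    rw [← hE, ← Real.exp_add]
    congr 1
    ring
  have hR : E * (q ^ 2 - 1) / q ^ 5 * (100 * τ * Real.exp (-τ / 2) * Real.sqrt a)
      = 100 * ((q ^ 2 - 1) / q ^ 5) * (τ * Real.sqrt a * Real.exp (τ / 2)) := by
    rw [← hEm]
    field_simp
  rw [hR]
  have h45 : (4 : ℝ) ≤ 100 * ((q ^ 2 - 1) / q ^ 5) := by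
    have hqu : q < 1.3 := by nlinarith
    have h4 : (q ^ 2) ^ 2 < 2.7225 := by nlinarith
    have h5 : q * (q ^ 2) ^ 2 < 3.6 := by
      nlinarith [mul_lt_mul'' hqu h4 hqpos.le (by positivity : (0 : ℝ) ≤ (q ^ 2) ^ 2)]
    have hq5 : q ^ 5 = q * (q ^ 2) ^ 2 := by ring
    have heq : 100 * ((q ^ 2 - 1) / q ^ 5) = 100 * (q ^ 2 - 1) / q ^ 5 := by ring
    rw [heq, le_div_iff₀ (by positivity)]
    rw [hq5]
    nlinarith
  have hXpos : 0 < τ * Real.sqrt a * Real.exp (τ / 2) := by positivity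
  calc 2 * (Real.sqrt a * Real.exp (τ / 2)) * (τ + τ)
      = 4 * (τ * Real.sqrt a * Real.exp (τ / 2)) := by ring
    _ ≤ 100 * ((q ^ 2 - 1) / q ^ 5) * (τ * Real.sqrt a * Real.exp (τ / 2)) :=
        mul_le_mul_of_nonneg_right h45 hXpos.le

end SqrtImAux

/-- Averaging decay for the Foster–Lyapunov–Margulis function `√(Im z)` on the
hyperbolic plane: there is `C > 0` such that for all `τ ≥ 1` and all `z`, the
average of `√(Im ·)` over the hyperbolic ball `B_τ(z)` is at most
`C · τ · exp(−τ/2) · √(Im z)`. -/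
theorem sqrt_im_average_decay :
    ∃ C > (0 : ℝ), ∀ τ ≥ (1 : ℝ), ∀ z : UpperHalfPlane,
      (hypMeasure (Metric.ball z τ))⁻¹
          * ∫⁻ w in Metric.ball z τ, ENNReal.ofReal (Real.sqrt w.im) ∂hypMeasure
        ≤ ENNReal.ofReal (C * τ * Real.exp (-τ / 2) * Real.sqrt z.im) := by
  refine ⟨100, by norm_num, fun τ hτ z => ?_⟩
  have hτ0 : (0 : ℝ) < τ := by linarith
  set a : ℝ := z.im with ha_def
  have ha : 0 < a := z.2
  set x₀ : ℝ := z.re with hx₀_def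
  set E : ℝ := Real.exp τ with hE_def
  have hEpos : 0 < E := Real.exp_pos τ
  have hE1 : 1 < E := by
    rw [hE_def, show (1 : ℝ) = Real.exp 0 from (Real.exp_zero).symm]
    exact Real.exp_lt_exp.mpr hτ0
  have hEe : Real.exp 1 ≤ E := Real.exp_le_exp.mpr hτ
  -- numeric facts about q = exp(1/4)
  set q : ℝ := Real.exp ((4 : ℝ)⁻¹) with hq_def
  have hqpos : 0 < q := Real.exp_pos _
  have hq4 : q ^ 4 = Real.exp 1 := by
    rw [hq_def, ← Real.exp_nat_mul]
    norm_num
  have he1 : (2.7182818283 : ℝ) < Real.exp 1 := Real.exp_one_gt_d9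
  have he2 : Real.exp 1 < 2.7182818286 := Real.exp_one_lt_d9
  have hs_lb : (1.64 : ℝ) < q ^ 2 := by nlinarith [sq_nonneg (q ^ 2 - 1.64), sq_nonneg q]
  have hs_ub : q ^ 2 < 1.65 := by nlinarith [sq_nonneg (q ^ 2 + 1.65), sq_nonneg q]
  have hq_lb : 1 < q := by nlinarith
  have hq_ub : q < 1.3 := by nlinarith
  have hq4E : q ^ 4 ≤ E := hq4 ▸ hEe
  -- the image of the ball in ℂ
  set S : Set ℂ := (fun ζ : UpperHalfPlane => (ζ : ℂ)) '' (Metric.ball z τ) with hS_def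
  have hSopen : IsOpen S := isOpenEmbedding_coe.isOpenMap _ Metric.isOpen_ball
  have hball_pre : Metric.ball z τ = (fun ζ : UpperHalfPlane => (ζ : ℂ)) ⁻¹' S := by
    rw [hS_def, Set.preimage_image_eq _ SqrtImAux.mE.injective]
  have hballmeas : MeasurableSet (Metric.ball z τ) := by
    rw [hball_pre]; exact SqrtImAux.mE.measurable hSopen.measurableSet
  have hcosh_tau : Real.cosh τ = (E + E⁻¹) / 2 := by
    rw [Real.cosh_eq, Real.exp_neg, hE_def]
  -- membership: forward direction
  have hS1 : ∀ w ∈ S, 0 < w.im ∧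
      1 + ((x₀ - w.re) ^ 2 + (a - w.im) ^ 2) / (2 * a * w.im) ≤ (E + E⁻¹) / 2 := by
    rintro w ⟨ζ, hζ, rfl⟩
    refine ⟨ζ.2, ?_⟩
    have hd : dist z ζ < τ := by rw [dist_comm]; exact Metric.mem_ball.mp hζ
    have hcosh : Real.cosh (dist z ζ) ≤ Real.cosh τ := by
      apply Real.cosh_le_cosh.mpr
      rw [abs_of_nonneg dist_nonneg, abs_of_pos hτ0]
      exact hd.le
    rw [UpperHalfPlane.cosh_dist, hcosh_tau] at hcosh
    have hd2 : dist (z : ℂ) (ζ : ℂ) ^ 2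
        = (x₀ - (ζ : ℂ).re) ^ 2 + (a - (ζ : ℂ).im) ^ 2 := by
      rw [Complex.dist_eq_re_im, Real.sq_sqrt (by positivity)]
      rw [ha_def, hx₀_def, UpperHalfPlane.coe_re, UpperHalfPlane.coe_im]
    rw [hd2] at hcosh
    have him : UpperHalfPlane.im z = a := ha_def.symm
    have him2 : UpperHalfPlane.im ζ = (ζ : ℂ).im := rfl
    rw [him, him2] at hcosh
    exact hcosh
  -- membership: reverse direction
  have hS2 : ∀ w : ℂ, 0 < w.im →
      1 + ((x₀ - w.re) ^ 2 + (a - w.im) ^ 2) / (2 * a * w.im) < (E + E⁻¹) / 2 → w ∈ S := by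
    intro w him hlt
    refine ⟨⟨w, him⟩, ?_, rfl⟩
    rw [Metric.mem_ball, dist_comm]
    have hcosh : Real.cosh (dist z (⟨w, him⟩ : UpperHalfPlane)) < Real.cosh τ := by
      rw [UpperHalfPlane.cosh_dist, hcosh_tau]
      show 1 + dist (z : ℂ) w ^ 2 / (2 * UpperHalfPlane.im z * w.im) < (E + E⁻¹) / 2
      have hd2 : dist (z : ℂ) w ^ 2 = (x₀ - w.re) ^ 2 + (a - w.im) ^ 2 := by
        rw [Complex.dist_eq_re_im, Real.sq_sqrt (by positivity)]
        rw [ha_def, hx₀_def, UpperHalfPlane.coe_re, UpperHalfPlane.coe_im]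
      rw [hd2, show UpperHalfPlane.im z = a from ha_def.symm]
      exact hlt
    have := Real.cosh_lt_cosh.mp hcosh
    rw [abs_of_pos hτ0] at this
    exact lt_of_le_of_lt (le_abs_self _) this
  -- S is contained in the "strip" T
  set T : Set ℂ :=
    {w : ℂ | w.im ∈ Set.Icc (a / E) (a * E) ∧ |w.re - x₀| ≤ Real.sqrt (a * E * w.im)}
    with hT_def
  have hST : ∀ w ∈ S, w ∈ T := by
    intro w hw
    obtain ⟨him, hc⟩ := hS1 w hw
    have h2ay : (0 : ℝ) < 2 * a * w.im := by positivity
    have hc' : (x₀ - w.re) ^ 2 + (a - w.im) ^ 2 ≤ ((E + E⁻¹) / 2 - 1) * (2 * a * w.im) :=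
      (div_le_iff₀ h2ay).mp (by linarith)
    obtain ⟨hlo, hup, hx2⟩ :=
      SqrtImAux.strip_arith ha him hE1 hc' (sq_nonneg (x₀ - w.re))
    have hswap : (w.re - x₀) ^ 2 = (x₀ - w.re) ^ 2 := by ring
    exact ⟨⟨hlo, hup⟩, Real.abs_le_sqrt (by rw [hswap]; exact hx2)⟩
  -- rewrite the numerator as an integral over ℂ
  have hfmeas : Measurable (S.indicator fun w : ℂ => ENNReal.ofReal (Real.sqrt w.im)) :=
    ((Real.continuous_sqrt.measurable.comp Complex.measurable_im).ennreal_ofReal).indicator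
      hSopen.measurableSet
  have hnum0 : (∫⁻ w in Metric.ball z τ, ENNReal.ofReal (Real.sqrt w.im) ∂hypMeasure)
      = ∫⁻ w in {w : ℂ | 0 < w.im}, ENNReal.ofReal ((w.im ^ 2)⁻¹)
          * S.indicator (fun w => ENNReal.ofReal (Real.sqrt w.im)) w ∂volume := by
    rw [← lintegral_indicator hballmeas, ← SqrtImAux.lintegral_hyp _ hfmeas]
    congr 1
    funext ζ
    by_cases hζ : ζ ∈ Metric.ball z τ
    · rw [Set.indicator_of_mem hζ, Set.indicator_of_mem (Set.mem_image_of_mem _ hζ)]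
      rfl
    · rw [Set.indicator_of_notMem hζ, Set.indicator_of_notMem
        (fun hmem => hζ (by rwa [SqrtImAux.mE.injective.mem_set_image] at hmem))]
  have hnum1 : (∫⁻ w in {w : ℂ | 0 < w.im}, ENNReal.ofReal ((w.im ^ 2)⁻¹)
          * S.indicator (fun w => ENNReal.ofReal (Real.sqrt w.im)) w ∂volume)
      ≤ ∫⁻ w : ℂ, T.indicator
          (fun w => ENNReal.ofReal ((Real.sqrt w.im)⁻¹ * w.im⁻¹)) w ∂volume := by
    refine le_trans (lintegral_mono ?_) (setLIntegral_le_lintegral _ _)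
    intro w
    dsimp only
    by_cases hw : w ∈ S
    · obtain ⟨him, _⟩ := hS1 w hw
      rw [Set.indicator_of_mem hw, Set.indicator_of_mem (hST w hw),
        ← ENNReal.ofReal_mul (by positivity)]
      exact ENNReal.ofReal_le_ofReal (le_of_eq (SqrtImAux.val_eq him))
    · rw [Set.indicator_of_notMem hw, mul_zero]
      exact zero_le
  have hnum2 : (∫⁻ w : ℂ, T.indicator
          (fun w => ENNReal.ofReal ((Real.sqrt w.im)⁻¹ * w.im⁻¹)) w ∂volume)
      = ∫⁻ y in Set.Icc (a / E) (a * E),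
          ENNReal.ofReal ((Real.sqrt y)⁻¹ * y⁻¹) * ENNReal.ofReal (2 * Real.sqrt (a * E * y))
            ∂volume := by
    simpa [hT_def] using SqrtImAux.lintegral_strip x₀ (Set.Icc (a / E) (a * E)) measurableSet_Icc
      (fun y => Real.sqrt (a * E * y)) (fun y => (Real.sqrt y)⁻¹ * y⁻¹)
      (Real.continuous_sqrt.measurable.comp (measurable_const.mul measurable_id))
      ((Real.continuous_sqrt.measurable.inv).mul measurable_id.inv)
  have hnum3 : (∫⁻ y in Set.Icc (a / E) (a * E),
          ENNReal.ofReal ((Real.sqrt y)⁻¹ * y⁻¹) * ENNReal.ofReal (2 * Real.sqrt (a * E * y))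
            ∂volume)
      = ∫⁻ y in Set.Icc (a / E) (a * E),
          ENNReal.ofReal (2 * Real.sqrt (a * E)) * ENNReal.ofReal y⁻¹ ∂volume := by
    apply setLIntegral_congr_fun measurableSet_Icc
    intro y hy
    have hy0 : 0 < y := lt_of_lt_of_le (by positivity : (0 : ℝ) < a / E) hy.1
    have hsp : 0 < Real.sqrt y := Real.sqrt_pos.mpr hy0
    dsimp only
    rw [← ENNReal.ofReal_mul (by positivity), ← ENNReal.ofReal_mul (by positivity)]
    congr 1
    rw [Real.sqrt_mul (by positivity : (0 : ℝ) ≤ a * E) y]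
    field_simp
  have hle_Icc : a / E ≤ a * E := SqrtImAux.div_le_mul_self ha hE1
  have hnum4 : (∫⁻ y in Set.Icc (a / E) (a * E),
          ENNReal.ofReal (2 * Real.sqrt (a * E)) * ENNReal.ofReal y⁻¹ ∂volume)
      = ENNReal.ofReal (2 * Real.sqrt (a * E)) * ENNReal.ofReal (τ + τ) := by
    rw [lintegral_const_mul' _ _ ENNReal.ofReal_ne_top]
    congr 1
    rw [SqrtImAux.lintegral_inv_Icc (by positivity) hle_Icc]
    congr 1
    have hquot : a * E / (a / E) = Real.exp (τ + τ) := by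
      rw [Real.exp_add, ← hE_def]
      field_simp
    rw [hquot, Real.log_exp]
  have hnumtot : (∫⁻ w in Metric.ball z τ, ENNReal.ofReal (Real.sqrt w.im) ∂hypMeasure)
      ≤ ENNReal.ofReal (2 * Real.sqrt (a * E) * (τ + τ)) := by
    rw [hnum0]
    refine le_trans hnum1 ?_
    rw [hnum2, hnum3, hnum4, ← ENNReal.ofReal_mul (by positivity)]
  -- the rectangle R inside the ball
  set y1 : ℝ := a * q ^ 2 / E with hy1_def
  set y2 : ℝ := a * q ^ 4 / E with hy2_def
  set L : ℝ := a * q / 2 with hL_def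
  have hy1pos : 0 < y1 := by positivity
  have hy2pos : 0 < y2 := by positivity
  have hq21 : (1 : ℝ) < q ^ 2 := by linarith
  have hq24 : q ^ 2 ≤ q ^ 4 := by nlinarith
  have hy12 : y1 ≤ y2 := by
    rw [hy1_def, hy2_def]
    gcongr
  set R : Set ℂ := {w : ℂ | w.im ∈ Set.Icc y1 y2 ∧ |w.re - x₀| ≤ L} with hR_def
  have hRmeas : MeasurableSet R := by
    refine MeasurableSet.inter ?_ ?_
    · exact Complex.measurable_im measurableSet_Icc
    · exact measurableSet_le (Complex.measurable_re.sub measurable_const).abs measurable_const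
  have hRsub : ∀ w ∈ R, w ∈ S := by
    rintro w ⟨hyIcc, hx⟩
    have him : 0 < w.im := lt_of_lt_of_le hy1pos hyIcc.1
    apply hS2 w him
    have hx2 : (x₀ - w.re) ^ 2 ≤ (a * q / 2) ^ 2 := by
      have h1 : |x₀ - w.re| ≤ a * q / 2 := by
        rw [abs_sub_comm]
        exact hx
      calc (x₀ - w.re) ^ 2 = |x₀ - w.re| ^ 2 := (sq_abs _).symm
        _ ≤ (a * q / 2) ^ 2 := pow_le_pow_left₀ (abs_nonneg _) h1 2
    exact SqrtImAux.rect_arith ha hq_lb hs_lb hs_ub hq4E hyIcc.1 hyIcc.2 hx2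
  -- lower bound for the measure of the ball
  have hden0 : hypMeasure (Metric.ball z τ)
      = ∫⁻ w in {w : ℂ | 0 < w.im}, ENNReal.ofReal ((w.im ^ 2)⁻¹)
          * S.indicator 1 w ∂volume := by
    rw [← lintegral_indicator_one hballmeas,
      ← SqrtImAux.lintegral_hyp (S.indicator 1) (measurable_one.indicator hSopen.measurableSet)]
    congr 1
    funext ζ
    by_cases hζ : ζ ∈ Metric.ball z τ
    · rw [Set.indicator_of_mem hζ, Set.indicator_of_mem (Set.mem_image_of_mem _ hζ)]
      rfl
    · rw [Set.indicator_of_notMem hζ, Set.indicator_of_notMem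
        (fun hmem => hζ (by rwa [SqrtImAux.mE.injective.mem_set_image] at hmem))]
  have hRV : R ⊆ {w : ℂ | 0 < w.im} := fun w hw => lt_of_lt_of_le hy1pos hw.1.1
  have hden1 : (∫⁻ w : ℂ, R.indicator (fun _ => ENNReal.ofReal ((y2 ^ 2)⁻¹)) w ∂volume)
      ≤ hypMeasure (Metric.ball z τ) := by
    rw [hden0]
    have hstep : (∫⁻ w : ℂ, R.indicator (fun _ => ENNReal.ofReal ((y2 ^ 2)⁻¹)) w ∂volume)
        = ∫⁻ w in {w : ℂ | 0 < w.im},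
            R.indicator (fun _ => ENNReal.ofReal ((y2 ^ 2)⁻¹)) w ∂volume := by
      rw [lintegral_indicator hRmeas, lintegral_indicator hRmeas,
        Measure.restrict_restrict hRmeas, Set.inter_eq_self_of_subset_left hRV]
    rw [hstep]
    apply lintegral_mono
    intro w
    dsimp only
    by_cases hw : w ∈ R
    · rw [Set.indicator_of_mem hw, Set.indicator_of_mem (hRsub w hw)]
      have him : 0 < w.im := hRV hw
      have hwy2 : w.im ≤ y2 := hw.1.2
      have hsq : w.im ^ 2 ≤ y2 ^ 2 := pow_le_pow_left₀ him.le hwy2 2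
      have hinv : (y2 ^ 2)⁻¹ ≤ (w.im ^ 2)⁻¹ := by
        apply inv_anti₀ (by positivity) hsq
      calc ENNReal.ofReal ((y2 ^ 2)⁻¹) ≤ ENNReal.ofReal ((w.im ^ 2)⁻¹) :=
            ENNReal.ofReal_le_ofReal hinv
        _ = ENNReal.ofReal ((w.im ^ 2)⁻¹) * 1 := (mul_one _).symm
    · rw [Set.indicator_of_notMem hw]
      exact zero_le
  have hstrip2 : (∫⁻ w : ℂ, R.indicator (fun _ => ENNReal.ofReal ((y2 ^ 2)⁻¹)) w ∂volume)
      = ENNReal.ofReal ((y2 ^ 2)⁻¹) * ENNReal.ofReal (2 * L) * ENNReal.ofReal (y2 - y1) := by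
    have h := SqrtImAux.lintegral_strip x₀ (Set.Icc y1 y2) measurableSet_Icc
      (fun _ => L) (fun _ => (y2 ^ 2)⁻¹) measurable_const measurable_const
    rw [h, setLIntegral_const, Real.volume_Icc]

  have hDpos : (0 : ℝ) < (y2 ^ 2)⁻¹ * (2 * L) * (y2 - y1) := by
    have hsub : 0 < y2 - y1 := by
      have : y2 - y1 = a * (q ^ 4 - q ^ 2) / E := by
        rw [hy1_def, hy2_def]
        ring
      rw [this]
      have hq42 : 0 < q ^ 4 - q ^ 2 := by nlinarith
      positivity
    positivity
  have hden : ENNReal.ofReal ((y2 ^ 2)⁻¹ * (2 * L) * (y2 - y1))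
      ≤ hypMeasure (Metric.ball z τ) := by
    rw [ENNReal.ofReal_mul (by positivity), ENNReal.ofReal_mul (by positivity), ← hstrip2]
    exact hden1
  -- final assembly
  calc (hypMeasure (Metric.ball z τ))⁻¹
        * ∫⁻ w in Metric.ball z τ, ENNReal.ofReal (Real.sqrt w.im) ∂hypMeasure
      ≤ (ENNReal.ofReal ((y2 ^ 2)⁻¹ * (2 * L) * (y2 - y1)))⁻¹
          * ENNReal.ofReal (2 * Real.sqrt (a * E) * (τ + τ)) :=
        mul_le_mul' (ENNReal.inv_le_inv' hden) hnumtot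
    _ = ENNReal.ofReal (((y2 ^ 2)⁻¹ * (2 * L) * (y2 - y1))⁻¹
          * (2 * Real.sqrt (a * E) * (τ + τ))) := by
        rw [← ENNReal.ofReal_inv_of_pos hDpos,
          ← ENNReal.ofReal_mul (inv_nonneg.mpr hDpos.le)]
    _ ≤ ENNReal.ofReal (100 * τ * Real.exp (-τ / 2) * Real.sqrt z.im) := by
        apply ENNReal.ofReal_le_ofReal
        have := SqrtImAux.final_arith ha hτ0 hq_lb hs_lb hs_ub hE_def.symm
        rw [hy1_def, hy2_def, hL_def]
        exact this
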